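/- Assume S satisfies identity (1). Let C ⊆ B, let e₁ ∈ E(S) ∪ {□}, and let t₁ ∈ β(P^C[e₁]). If t₁ is not left saturated, then there exists a letter c = (e,x,f) ∈ C such that for every v ∈ C* satisfying v·c ∈ T^C[e₁,f], one has t₁ ∉ t₁·β(v·c)·M. -/

import Mathlib

/-- The type of letters of the alphabet `B = (E(S) ∪ {□}) × M × (E(S) ∪ {□})`:
a guard is an element of `Option M`, where `none` plays the role of `□`. -/
abbrev BLetter (M : Type*) := Option M × M × Option M

/-- A guard is valid if it is `□` or an idempotent element of `S`. -/
def GuardOK {M : Type*} [Monoid M] (S : Set M) (g : Option M) : Prop :=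
  ∀ m : M, g = some m → m ∈ S ∧ m * m = m

/-- The set of letters of the alphabet `B`. -/
def Bset {M : Type*} [Monoid M] (S : Set M) : Set (BLetter M) :=
  {b | GuardOK S b.1 ∧ GuardOK S b.2.2}

/-- The value `β(b)` of a letter `b = (e,s,f)`: it is `e·s·f` where a `□` guard
is interpreted as `1`. This encodes the four cases `β((e,s,f)) = e·s·f`,
`β((□,s,f)) = s·f`, `β((e,s,□)) = e·s` and `β((□,s,□)) = s`. -/
def letterVal {M : Type*} [Monoid M] (b : BLetter M) : M :=
  b.1.getD 1 * b.2.1 * b.2.2.getD 1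

/-- The morphism `β : B* → M`. -/
def betaWord {M : Type*} [Monoid M] (u : List (BLetter M)) : M :=
  (u.map letterVal).prod

/-- A word `(e₀,s₀,f₀)⋯(e_n,s_n,f_n) ∈ B*` is pseudo well-formed when
`f_i = e_{i+1} ∈ E(S)` for every `i < n` (the empty word and one-letter words
are pseudo well-formed). -/
def PseudoWF {M : Type*} [Monoid M] (S : Set M) : List (BLetter M) → Prop
  | [] => True
  | [_] => True
  | b₁ :: b₂ :: rest =>
      (∃ g : M, g ∈ S ∧ g * g = g ∧ b₁.2.2 = some g ∧ b₂.1 = some g) ∧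
      PseudoWF S (b₂ :: rest)

/-- The left guard `e₀` of a word `(e₀,s₀,f₀)⋯(e_n,s_n,f_n)` (junk on `ε`). -/
def leftGuard {M : Type*} [Monoid M] (u : List (BLetter M)) : Option M :=
  (u.headD (none, 1, none)).1

/-- The right guard `f_n` of a word `(e₀,s₀,f₀)⋯(e_n,s_n,f_n)` (junk on `ε`). -/
def rightGuard {M : Type*} [Monoid M] (u : List (BLetter M)) : Option M :=
  (u.getLastD (none, 1, none)).2.2

/-- A word of `B*` is well-formed if it is nonempty, pseudo well-formed and both
its guards are `□`. -/
def WellFormed {M : Type*} [Monoid M] (S : Set M) (u : List (BLetter M)) : Prop :=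
  u ≠ [] ∧ PseudoWF S u ∧ leftGuard u = none ∧ rightGuard u = none

/-- `T^C[e,f]`: nonempty pseudo well-formed words over `C` with left guard `e` and
right guard `f`, together with `ε` when `e = f ∈ E(S)`. -/
def Tset {M : Type*} [Monoid M] (S : Set M) (C : Set (BLetter M)) (e f : Option M) :
    Set (List (BLetter M)) :=
  {u | (u ≠ [] ∧ (∀ b ∈ u, b ∈ C) ∧ PseudoWF S u ∧ leftGuard u = e ∧ rightGuard u = f)
    ∨ (u = [] ∧ e = f ∧ ∃ g : M, g ∈ S ∧ g * g = g ∧ e = some g)}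

/-- `P^C[e]`: `{ε}` if `e = □`, and otherwise `ε` together with all nonempty pseudo
well-formed words over `C` with right guard `e`. -/
def Pset {M : Type*} [Monoid M] (S : Set M) (C : Set (BLetter M)) (e : Option M) :
    Set (List (BLetter M)) :=
  {u | u = [] ∨ (e ≠ none ∧ u ≠ [] ∧ (∀ b ∈ u, b ∈ C) ∧ PseudoWF S u ∧ rightGuard u = e)}

/-- `S^C[f]`: `{ε}` if `f = □`, and otherwise `ε` together with all nonempty pseudo
well-formed words over `C` with left guard `f`. -/
def Sset {M : Type*} [Monoid M] (S : Set M) (C : Set (BLetter M)) (f : Option M) :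
    Set (List (BLetter M)) :=
  {u | u = [] ∨ (f ≠ none ∧ u ≠ [] ∧ (∀ b ∈ u, b ∈ C) ∧ PseudoWF S u ∧ leftGuard u = f)}

/-- `t₁` is left saturated (w.r.t. `C` and `e₁`) when for every `f ∈ E(S) ∪ {□}`
and every `u ∈ T^C[e₁,f]`, `t₁ ∈ t₁·β(u)·M`. -/
def LeftSaturated {M : Type*} [Monoid M] (S : Set M) (C : Set (BLetter M))
    (e₁ : Option M) (t₁ : M) : Prop :=
  ∀ f : Option M, GuardOK S f → ∀ u ∈ Tset S C e₁ f,
    ∃ z : M, t₁ = t₁ * betaWord u * z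

section AuxStmt11

variable {M : Type*} [Monoid M]

lemma aux11_betaWord_append (u v : List (BLetter M)) :
    betaWord (u ++ v) = betaWord u * betaWord v := by
  simp [betaWord]

lemma aux11_betaWord_singleton (c : BLetter M) : betaWord [c] = letterVal c := by
  simp [betaWord]

lemma aux11_rightGuard_concat (v : List (BLetter M)) (c : BLetter M) :
    rightGuard (v ++ [c]) = c.2.2 := by
  simp [rightGuard]

lemma aux11_leftGuard_concat (v : List (BLetter M)) (c : BLetter M) (hv : v ≠ []) :
    leftGuard (v ++ [c]) = leftGuard v := by
  cases v with
  | nil => exact absurd rfl hv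
  | cons a l => rfl

lemma aux11_pwf_concat {S : Set M} :
    ∀ (v : List (BLetter M)) (c : BLetter M), PseudoWF S (v ++ [c]) →
      PseudoWF S v ∧
        (v ≠ [] → ∃ g : M, g ∈ S ∧ g * g = g ∧ rightGuard v = some g ∧ c.1 = some g)
  | [], _, _ => ⟨trivial, fun h => absurd rfl h⟩
  | [b], c, h => by
      obtain ⟨⟨g, hg⟩, -⟩ := h
      refine ⟨trivial, fun _ => ⟨g, hg.1, hg.2.1, ?_, hg.2.2.2⟩⟩
      simpa [rightGuard] using hg.2.2.1
  | b₁ :: b₂ :: rest, c, h => by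
      simp only [List.cons_append] at h
      obtain ⟨hj, h2⟩ := h
      have IH := aux11_pwf_concat (b₂ :: rest) c h2
      refine ⟨⟨hj, IH.1⟩, fun _ => ?_⟩
      obtain ⟨g, hg1, hg2, hg3, hg4⟩ := IH.2 (List.cons_ne_nil _ _)
      refine ⟨g, hg1, hg2, ?_, hg4⟩
      rw [show rightGuard (b₁ :: b₂ :: rest) = rightGuard (b₂ :: rest) by
        simp [rightGuard, List.getLastD_cons]]
      exact hg3

lemma aux11_rg_mul (v : List (BLetter M)) (hv : v ≠ []) (g : M)
    (hg : rightGuard v = some g) (hgg : g * g = g) : betaWord v * g = betaWord v := by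
  obtain ⟨L, d, rfl⟩ := v.eq_nil_or_concat'.resolve_left hv
  rw [aux11_rightGuard_concat] at hg
  simp [aux11_betaWord_append, aux11_betaWord_singleton, letterVal, hg, mul_assoc, hgg]

lemma aux11_idem_pow [Finite M] (m : M) : ∃ n : ℕ, 1 ≤ n ∧ m ^ n * m ^ n = m ^ n := by
  obtain ⟨i, j, hne, hij⟩ := Finite.exists_ne_map_eq_of_infinite (fun n : ℕ => m ^ n)
  wlog hlt : i < j generalizing i j
  · exact this j i hne.symm hij.symm (by omega)
  have hij : m ^ i = m ^ j := hij
  have hd1 : 1 ≤ j - i := by omega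
  have step : ∀ r : ℕ, m ^ (i + r) = m ^ (i + (j - i) + r) := by
    intro r
    rw [show i + (j - i) = j by omega, pow_add, pow_add, ← hij]
  have mult : ∀ t r : ℕ, m ^ (i + r) = m ^ (i + t * (j - i) + r) := by
    intro t
    induction t with
    | zero => simp
    | succ t ih =>
        intro r
        calc m ^ (i + r) = m ^ (i + (j - i) + r) := step r
          _ = m ^ (i + ((j - i) + r)) := by rw [Nat.add_assoc]
          _ = m ^ (i + t * (j - i) + ((j - i) + r)) := ih ((j - i) + r)
          _ = m ^ (i + (t + 1) * (j - i) + r) := by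
              congr 1
              ring
  refine ⟨(i + 1) * (j - i), le_trans hd1 (Nat.le_mul_of_pos_left _ (by omega)), ?_⟩
  have hni : i < (i + 1) * (j - i) := by
    calc i < i + 1 := by omega
      _ ≤ (i + 1) * (j - i) := Nat.le_mul_of_pos_right _ (by omega)
  rw [← pow_add]
  calc m ^ ((i + 1) * (j - i) + (i + 1) * (j - i))
      = m ^ (i + (i + 1) * (j - i) + ((i + 1) * (j - i) - i)) := by congr 1; omega
    _ = m ^ (i + ((i + 1) * (j - i) - i)) := (mult (i + 1) _).symm
    _ = m ^ ((i + 1) * (j - i)) := by congr 1; omega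

lemma aux11_mul_one_symm [Finite M] (b c : M) (h : b * c = 1) : c * b = 1 := by
  have hsurj : Function.Surjective (fun y : M => b * y) := fun y =>
    ⟨c * y, by dsimp; rw [← mul_assoc, h, one_mul]⟩
  have hinj : Function.Injective (fun y : M => b * y) :=
    Finite.injective_iff_surjective.mpr hsurj
  have hb : b * (c * b) = b * 1 := by rw [← mul_assoc, h, one_mul, mul_one]
  exact hinj hb

lemma aux11_key [Finite M] {S : Set M}
    (hId : ∀ s ∈ S, ∀ t ∈ S, ∀ e ∈ S, e * e = e → ∀ n : ℕ, 1 ≤ n →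
      (e * s * e * t * e) ^ n * (e * s * e * t * e) ^ n = (e * s * e * t * e) ^ n →
      (e * s * e * t * e) ^ n * t * (e * s * e * t * e) ^ n = (e * s * e * t * e) ^ n)
    (hidl : ∀ m s : M, s ∈ S → m * s ∈ S) (hidr : ∀ m s : M, s ∈ S → s * m ∈ S)
    (e a b x w z t₁ : M) (heS : e ∈ S) (hee : e * e = e)
    (ha : a * e = a) (hb : b * e = b) (hx : e * x = x)
    (h1 : t₁ * a * w = t₁) (h2 : t₁ * b * x * z = t₁) :
    ∃ m : M, t₁ = t₁ * a * x * m := by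
  have hsS : w * b ∈ S := by
    have h := hidl (w * b) e heS
    rwa [mul_assoc, hb] at h
  have hxS : x ∈ S := by
    have h := hidr x e heS
    rwa [hx] at h
  have htS : x * z * a ∈ S := by
    have h := hidr (z * a) x hxS
    rwa [← mul_assoc] at h
  have hae : ∀ y : M, a * (e * y) = a * y := fun y => by rw [← mul_assoc, ha]
  have hbe : ∀ y : M, b * (e * y) = b * y := fun y => by rw [← mul_assoc, hb]
  have h1' : ∀ y : M, t₁ * (a * (w * y)) = t₁ * y := fun y => by
    rw [← mul_assoc, ← mul_assoc, h1]
  have h2' : ∀ y : M, t₁ * (b * (x * (z * y))) = t₁ * y := fun y => by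
    rw [← mul_assoc, ← mul_assoc, ← mul_assoc, h2]
  have step : t₁ * a * (e * (w * b) * e * (x * z * a) * e) = t₁ * a := by
    simp only [mul_assoc]
    rw [ha, hae, hbe, h1', h2']
  have key1 : ∀ n : ℕ, t₁ * a * (e * (w * b) * e * (x * z * a) * e) ^ n = t₁ * a := by
    intro n
    induction n with
    | zero => simp
    | succ k ih => rw [pow_succ, ← mul_assoc, ih, step]
  obtain ⟨n, hn1, hidem⟩ := aux11_idem_pow (e * (w * b) * e * (x * z * a) * e)
  have key2 := hId (w * b) hsS (x * z * a) htS e heS hee n hn1 hidem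
  have key1' : ∀ y : M,
      t₁ * (a * ((e * (w * b) * e * (x * z * a) * e) ^ n * y)) = t₁ * (a * y) := fun y => by
    have h := congrArg (· * y) (key1 n)
    simpa [mul_assoc] using h
  have key2' : ∀ y : M,
      (e * (w * b) * e * (x * z * a) * e) ^ n *
        (x * (z * (a * ((e * (w * b) * e * (x * z * a) * e) ^ n * y)))) =
      (e * (w * b) * e * (x * z * a) * e) ^ n * y := fun y => by
    have h := congrArg (· * y) key2
    simpa [mul_assoc] using h
  refine ⟨z * a * (e * (w * b) * e * (x * z * a) * e) ^ n * w, ?_⟩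
  have h4 : t₁ * (a * (x * (z * (a * ((e * (w * b) * e * (x * z * a) * e) ^ n * w))))) = t₁ := by
    rw [← key1' (x * (z * (a * ((e * (w * b) * e * (x * z * a) * e) ^ n * w)))),
      key2' w, key1' w, ← mul_assoc, h1]
  simpa [mul_assoc] using h4.symm

end AuxStmt11

/-- Assume `S` satisfies identity (1). Let `C ⊆ B`, `e₁ ∈ E(S) ∪ {□}` and
`t₁ ∈ β(P^C[e₁])`. If `t₁` is not left saturated, then there exists a letter
`c = (e,x,f) ∈ C` such that for every `v ∈ C*` satisfying `v·c ∈ T^C[e₁,f]`,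
one has `t₁ ∉ t₁·β(v·c)·M`. -/
theorem stmt_11 {A M : Type*} [Fintype A] [Fintype M] [Monoid M]
    (α : List A → M) (hα1 : α [] = 1)
    (hαmul : ∀ u v : List A, α (u ++ v) = α u * α v)
    (hαsurj : Function.Surjective α)
    (S : Set M) (hS : S = {m : M | ∃ u : List A, u ≠ [] ∧ α u = m})
    (hId : ∀ s ∈ S, ∀ t ∈ S, ∀ e ∈ S, e * e = e → ∀ n : ℕ, 1 ≤ n →
      (e * s * e * t * e) ^ n * (e * s * e * t * e) ^ n = (e * s * e * t * e) ^ n →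
      (e * s * e * t * e) ^ n * t * (e * s * e * t * e) ^ n = (e * s * e * t * e) ^ n)
    (C : Set (BLetter M)) (hC : C ⊆ Bset S)
    (e₁ : Option M) (he₁ : GuardOK S e₁)
    (t₁ : M) (ht₁ : ∃ p ∈ Pset S C e₁, betaWord p = t₁)
    (hnotsat : ¬ LeftSaturated S C e₁ t₁) :
    ∃ c ∈ C, ∀ v : List (BLetter M), (∀ b ∈ v, b ∈ C) →
      v ++ [c] ∈ Tset S C e₁ c.2.2 →
      ¬ ∃ z : M, t₁ = t₁ * betaWord (v ++ [c]) * z := by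
  classical
  have hidl : ∀ m s : M, s ∈ S → m * s ∈ S := by
    intro m s hs
    rw [hS] at hs ⊢
    obtain ⟨us, hus, rfl⟩ := hs
    obtain ⟨um, rfl⟩ := hαsurj m
    exact ⟨um ++ us, fun h => hus (List.append_eq_nil_iff.mp h).2, hαmul um us⟩
  have hidr : ∀ m s : M, s ∈ S → s * m ∈ S := by
    intro m s hs
    rw [hS] at hs ⊢
    obtain ⟨us, hus, rfl⟩ := hs
    obtain ⟨um, rfl⟩ := hαsurj m
    exact ⟨us ++ um, fun h => hus (List.append_eq_nil_iff.mp h).1, hαmul us um⟩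
  have hex : ∃ n : ℕ, ∃ u : List (BLetter M),
      ((∃ f, GuardOK S f ∧ u ∈ Tset S C e₁ f) ∧ ¬∃ z : M, t₁ = t₁ * betaWord u * z) ∧
        u.length = n := by
    unfold LeftSaturated at hnotsat
    push_neg at hnotsat
    obtain ⟨f, hf, u, huT, hu⟩ := hnotsat
    exact ⟨u.length, u, ⟨⟨f, hf, huT⟩, by push_neg; exact hu⟩, rfl⟩
  obtain ⟨u, ⟨⟨f, hf, huT⟩, hubad⟩, hulen⟩ := Nat.find_spec hex
  have hmin : ∀ u' : List (BLetter M),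
      (∃ f', GuardOK S f' ∧ u' ∈ Tset S C e₁ f') →
      ¬(∃ z : M, t₁ = t₁ * betaWord u' * z) → Nat.find hex ≤ u'.length :=
    fun u' hh1 hh2 => Nat.find_min' hex ⟨u', ⟨hh1, hh2⟩, rfl⟩
  have hune : u ≠ [] := by
    rintro rfl
    exact hubad ⟨1, by simp [betaWord]⟩
  obtain ⟨v₀, c, rfl⟩ := u.eq_nil_or_concat'.resolve_left hune
  rcases huT with h | h
  swap
  · exact absurd h.1 (by simp)
  obtain ⟨-, huC, hupwf, hulg, hurg⟩ := h
  have hcC : c ∈ C := huC c (by simp)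
  have hpwf := aux11_pwf_concat v₀ c hupwf
  refine ⟨c, hcC, ?_⟩
  intro v hvC hvT
  rintro ⟨z, hz⟩
  have hbad : ∀ m : M, t₁ ≠ t₁ * betaWord v₀ * letterVal c * m := by
    intro m hm
    exact hubad ⟨m, by
      rw [aux11_betaWord_append, aux11_betaWord_singleton, ← mul_assoc]; exact hm⟩
  rcases hvT with h' | h'
  swap
  · exact absurd h'.1 (by simp)
  obtain ⟨-, hvC', hvpwf, hvlg, -⟩ := h'
  have hvpwf' := aux11_pwf_concat v c hvpwf
  have hzgood : t₁ = t₁ * betaWord v * letterVal c * z := by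
    rw [aux11_betaWord_append, aux11_betaWord_singleton, ← mul_assoc] at hz
    exact hz
  rcases hc1 : c.1 with _ | e
  · -- c.1 = none
    have hv₀nil : v₀ = [] := by
      by_contra hne
      obtain ⟨g, -, -, -, hcg⟩ := hpwf.2 hne
      rw [hc1] at hcg
      cases hcg
    have hvnil : v = [] := by
      by_contra hne
      obtain ⟨g, -, -, -, hcg⟩ := hvpwf'.2 hne
      rw [hc1] at hcg
      cases hcg
    apply hbad z
    rw [hv₀nil]
    rw [hvnil] at hzgood
    exact hzgood
  · -- c.1 = some e
    obtain ⟨heS, hee⟩ := (hC hcC).1 e hc1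
    have hx : e * letterVal c = letterVal c := by
      simp [letterVal, hc1, ← mul_assoc, hee]
    -- the `b` side, coming from v ++ [c]
    have hb2 : ∃ b : M, b * e = b ∧ t₁ * b * letterVal c * z = t₁ := by
      by_cases hv : v = []
      · refine ⟨e, hee, ?_⟩
        subst hv
        have hg : t₁ = t₁ * letterVal c * z := by simpa [betaWord] using hzgood
        rw [mul_assoc t₁ e (letterVal c), hx]
        exact hg.symm
      · obtain ⟨g, hgS, hgg, hrg, hcg⟩ := hvpwf'.2 hv
        rw [hc1] at hcg
        obtain rfl : e = g := Option.some.inj hcg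
        exact ⟨betaWord v, aux11_rg_mul v hv e hrg hgg, hzgood.symm⟩
    obtain ⟨b, hbe, h2⟩ := hb2
    -- the `a` side, coming from a minimal bad word
    by_cases hv₀ : v₀ = []
    · have he₁ : e₁ = some e := by
        rw [← hulg, hv₀]
        simp [leftGuard, hc1]
      obtain ⟨p, hp, hpt⟩ := ht₁
      rcases hp with hpnil | ⟨-, hpne, -, -, hprg⟩
      · -- p = ε, so t₁ = 1 : use the finite-monoid unit argument
        have ht1 : t₁ = 1 := by rw [← hpt, hpnil]; rfl
        have hbx : b * (letterVal c * z) = 1 := by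
          have hh := h2
          rw [ht1] at hh
          simpa [mul_assoc] using hh
        have hone := aux11_mul_one_symm b (letterVal c * z) hbx
        apply hbad (z * b)
        rw [ht1, hv₀]
        have hone' : letterVal c * (z * b) = 1 := by rw [← mul_assoc]; exact hone
        calc (1 : M) = letterVal c * (z * b) := hone'.symm
          _ = 1 * betaWord ([] : List (BLetter M)) * letterVal c * (z * b) := by
              simp [betaWord]
      · -- p ≠ ε, so t₁ · e = t₁
        have hte : t₁ * e = t₁ := by
          rw [← hpt]
          exact aux11_rg_mul p hpne e (by rw [hprg, he₁]) hee
        obtain ⟨m, hm⟩ := aux11_key hId hidl hidr e e b (letterVal c) 1 z t₁ heS hee hee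
          hbe hx (by rw [mul_one]; exact hte) h2
        apply hbad m
        rw [hv₀]
        calc t₁ = t₁ * e * letterVal c * m := hm
          _ = t₁ * betaWord ([] : List (BLetter M)) * letterVal c * m := by
              rw [mul_assoc t₁ e (letterVal c), hx]
              simp [betaWord]
    · -- v₀ ≠ ε : v₀ ∈ T^C[e₁, c.1] is strictly shorter, hence good
      obtain ⟨g, hgS, hgg, hrg0, hcg0⟩ := hpwf.2 hv₀
      rw [hc1] at hcg0
      obtain rfl : e = g := Option.some.inj hcg0
      have hv₀T : v₀ ∈ Tset S C e₁ c.1 :=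
        Or.inl ⟨hv₀, fun b' hb' => huC b' (List.mem_append_left _ hb'), hpwf.1,
          by rw [← hulg, aux11_leftGuard_concat v₀ c hv₀],
          by rw [hc1]; exact hrg0⟩
      have hv₀good : ∃ w : M, t₁ = t₁ * betaWord v₀ * w := by
        by_contra hcon
        have hle := hmin v₀ ⟨c.1, (hC hcC).1, hv₀T⟩ hcon
        have hl : (v₀ ++ [c]).length = v₀.length + 1 := by simp
        omega
      obtain ⟨w, hw⟩ := hv₀good
      obtain ⟨m, hm⟩ := aux11_key hId hidl hidr e (betaWord v₀) b (letterVal c) w z t₁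
        heS hee (aux11_rg_mul v₀ hv₀ e hrg0 hgg) hbe hx hw.symm h2
      exact hbad m hm
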